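/- With the construction below: for every tuple s = (s_1,…,s_l) of integers with 1 ≤ s_i ≤ 9 for all i and Σ_{i=1}^l s_i = n/6 + 5, it holds that LCS(x(s) ∘ f(s), y) = n/2 + 5. -/

import Mathlib

open List

/-- `LCS(u,v)`: the maximum length of a string that is a subsequence of both `u` and `v`. -/
noncomputable def LCSlen {α : Type*} (u v : List α) : ℕ :=
  sSup {k : ℕ | ∃ w : List α, w <+ u ∧ w <+ v ∧ w.length = k}

/- The alphabet `{a, b}` is modelled by `Bool`, with `a := false` and `b := true`. -/

/-- `x(s) = b^10 a^{s_1} b^10 a^{s_2} b^10 ⋯ b^10 a^{s_l} b^10`. -/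
def xstr (l : ℕ) (s : Fin l → ℕ) : List Bool :=
  List.replicate 10 true ++
    (List.ofFn fun i : Fin l =>
      List.replicate (s i) false ++ List.replicate 10 true).flatten

/-- `f(s) = a^{s_1} b^10 a^{s_2} b^10 ⋯ b^10 a^{s_l} b^10`, i.e. `x(s)` with the leading
block of `10` `b`'s removed. -/
def fstr (l : ℕ) (s : Fin l → ℕ) : List Bool :=
  (List.ofFn fun i : Fin l =>
    List.replicate (s i) false ++ List.replicate 10 true).flatten

/-- `y = a^{n/3} b^{n/3} a^{n/3}`. -/
def ylcs (n : ℕ) : List Bool :=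
  List.replicate (n / 3) false ++ List.replicate (n / 3) true ++ List.replicate (n / 3) false

/-- the repeating structure `a^{c 0} b^10 a^{c 1} b^10 ⋯`. -/
def Zs : ℕ → (ℕ → ℕ) → List Bool
  | 0, _ => []
  | L+1, c => List.replicate (c 0) false ++ (List.replicate 10 true ++ Zs L (fun m => c (m+1)))

/-- the variant `b^10 a^{c 0} b^10 a^{c 1} ⋯`. -/
def Ws : ℕ → (ℕ → ℕ) → List Bool
  | 0, _ => []
  | L+1, c => List.replicate 10 true ++ (List.replicate (c 0) false ++ Ws L (fun m => c (m+1)))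

lemma count_false_Zs : ∀ (L : ℕ) (c : ℕ → ℕ),
    count false (Zs L c) = ∑ m ∈ Finset.range L, c m := by
  intro L
  induction L with
  | zero => simp [Zs]
  | succ L ih =>
    intro c
    simp [Zs, ih, Finset.sum_range_succ' c L, count_replicate]
    omega

lemma count_true_Zs : ∀ (L : ℕ) (c : ℕ → ℕ), count true (Zs L c) = 10 * L := by
  intro L
  induction L with
  | zero => simp [Zs]
  | succ L ih => intro c; simp [Zs, ih, count_replicate]; omega

lemma count_false_Ws : ∀ (L : ℕ) (c : ℕ → ℕ),
    count false (Ws L c) = ∑ m ∈ Finset.range L, c m := by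
  intro L
  induction L with
  | zero => simp [Ws]
  | succ L ih =>
    intro c
    simp [Ws, ih, Finset.sum_range_succ' c L, count_replicate]
    omega

lemma bZs_eq_Ws : ∀ (L : ℕ) (c : ℕ → ℕ),
    List.replicate 10 true ++ Zs L c = Ws L c ++ List.replicate 10 true := by
  intro L
  induction L with
  | zero => simp [Zs, Ws]
  | succ L ih =>
    intro c
    simp only [Zs, Ws, List.append_assoc]
    rw [ih (fun m => c (m+1))]

lemma ofFn_flatten_eq : ∀ (L : ℕ) (c : ℕ → ℕ),
    (List.ofFn fun i : Fin L =>
      List.replicate (c i.val) false ++ List.replicate 10 true).flatten = Zs L c := by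
  intro L
  induction L with
  | zero => simp [Zs]
  | succ L ih =>
    intro c
    rw [List.ofFn_succ]
    simp only [List.flatten_cons, Zs]
    rw [← ih (fun m => c (m+1))]
    simp [Fin.succ]

lemma Zs_append : ∀ (L : ℕ) (c : ℕ → ℕ) (L' : ℕ) (c' : ℕ → ℕ),
    Zs L c ++ Zs L' c' = Zs (L + L') (fun m => if m < L then c m else c' (m - L)) := by
  intro L
  induction L with
  | zero => intro c L' c'; simp [Zs]
  | succ L ih =>
    intro c L' c'
    have hL : L + 1 + L' = (L + L') + 1 := by omega
    rw [hL]
    simp only [Zs, List.append_assoc]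
    rw [ih (fun m => c (m+1)) L' c']
    have h0 : (if 0 < L + 1 then c 0 else c' (0 - (L + 1))) = c 0 := by simp
    have hf : (fun m => if m + 1 < L + 1 then c (m + 1) else c' (m + 1 - (L + 1)))
        = (fun m => if m < L then c (m + 1) else c' (m - L)) := by
      funext m
      by_cases h : m < L
      · rw [if_pos h, if_pos (by omega)]
      · rw [if_neg h, if_neg (by omega)]
        congr 1
        omega
    rw [h0, hf]

lemma shift_Ico (c : ℕ → ℕ) (u L : ℕ) :
    ∑ m ∈ Finset.Ico u L, c (m + 1) = ∑ m ∈ Finset.Ico (u + 1) (L + 1), c m := by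
  rw [Finset.sum_Ico_eq_sum_range, Finset.sum_Ico_eq_sum_range]
  have h : L + 1 - (u + 1) = L - u := by omega
  rw [h]
  exact Finset.sum_congr rfl fun k _ => by rw [show u + 1 + k = u + k + 1 by omega]

lemma split_bound : ∀ (L : ℕ) (c : ℕ → ℕ) (v1 v2 v3 : List Bool),
    v1 ++ v2 ++ v3 = List.replicate 10 true ++ Zs L c →
    ∃ t u, t ≤ u + 1 ∧ u ≤ L ∧
      count false v1 ≤ ∑ m ∈ Finset.range t, c m ∧
      count true v2 ≤ 10 * (u + 1 - t) ∧
      count false v3 ≤ ∑ m ∈ Finset.Ico u L, c m := by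
  intro L
  induction L with
  | zero =>
    intro c v1 v2 v3 hv
    simp only [Zs, List.append_nil] at hv
    have hall : ∀ x ∈ v1 ++ v2 ++ v3, x = true := by
      rw [hv]; exact fun x hx => eq_of_mem_replicate hx
    have h1 : count false v1 = 0 :=
      count_eq_zero.mpr fun hmem => by simpa using hall false (by simp [hmem])
    have h3 : count false v3 = 0 :=
      count_eq_zero.mpr fun hmem => by simpa using hall false (by simp [hmem])
    have hlen : v1.length + (v2.length + v3.length) = 10 := by
      have := congrArg List.length hv; simpa using this
    have h2 : count true v2 ≤ 10 := le_trans count_le_length (by omega)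
    exact ⟨0, 0, by omega, le_refl 0, by simp [h1], by simpa using h2, by simp [h3]⟩
  | succ L ih =>
    intro c v1 v2 v3 hv
    have hx : List.replicate 10 true ++ Zs (L + 1) c =
        (List.replicate 10 true ++ List.replicate (c 0) false) ++
          (List.replicate 10 true ++ Zs L (fun m => c (m + 1))) := by
      simp [Zs]
    rw [hx] at hv
    set head : List Bool := List.replicate 10 true ++ List.replicate (c 0) false with hhead
    set Y : List Bool := List.replicate 10 true ++ Zs L (fun m => c (m + 1)) with hY
    have hcfh : count false head = c 0 := by simp [hhead, count_replicate]
    have hcth : count true head = 10 := by simp [hhead, count_replicate]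
    have hlenh : head.length = 10 + c 0 := by simp [hhead]; omega
    by_cases h1 : head.length ≤ v1.length
    · -- v1 extends beyond the head block
      rw [List.append_assoc] at hv
      have hpre : head <+: v1 :=
        prefix_of_prefix_length_le ⟨Y, hv.symm⟩ (prefix_append v1 (v2 ++ v3)) h1
      obtain ⟨v1', rfl⟩ := hpre
      rw [List.append_assoc head v1'] at hv
      have hv' : v1' ++ (v2 ++ v3) = Y := append_cancel_left hv
      obtain ⟨t', u', htu, hu, hi, hj, hk⟩ :=
        ih (fun m => c (m + 1)) v1' v2 v3 (by rw [List.append_assoc]; exact hv'.trans hY)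
      refine ⟨t' + 1, u' + 1, by omega, by omega, ?_, ?_, ?_⟩
      · rw [count_append, hcfh, Finset.sum_range_succ' c t']
        omega
      · have h : u' + 1 + 1 - (t' + 1) = u' + 1 - t' := by omega
        rw [h]; exact hj
      · rw [← shift_Ico]; exact hk
    · push_neg at h1
      have hprev1 : v1 <+: head := by
        refine prefix_of_prefix_length_le ?_ ⟨Y, hv.symm⟩ (by omega)
        rw [List.append_assoc]; exact prefix_append v1 (v2 ++ v3)
      by_cases h2 : head.length ≤ v1.length + v2.length
      · -- v2 straddles the boundary
        have hpre2 : head <+: v1 ++ v2 := by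
          refine prefix_of_prefix_length_le ⟨Y, hv.symm⟩ (prefix_append _ _) ?_
          rw [hlenh] at h2 ⊢
          rw [List.length_append]
          exact h2
        obtain ⟨r, hr⟩ := hpre2
        obtain ⟨m2, hm2⟩ := hprev1
        have hv1h : v1 <+ head := List.IsPrefix.sublist ⟨m2, hm2⟩
        have hv2 : v2 = m2 ++ r := by
          have h : v1 ++ (m2 ++ r) = v1 ++ v2 := by
            rw [← List.append_assoc, hm2, hr]
          exact (append_cancel_left h).symm
        have hrv3 : r ++ v3 = Y := by
          have h : head ++ (r ++ v3) = head ++ Y := by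
            rw [← List.append_assoc, hr]; exact hv
          exact append_cancel_left h
        obtain ⟨t', u', htu, hu, hi, hj, hk⟩ :=
          ih (fun m => c (m + 1)) [] r v3 (by simpa using hrv3.trans hY)
        have hkk : count false v3 ≤ ∑ m ∈ Finset.Ico (u' + 1) (L + 1), c m := by
          rw [← shift_Ico]; exact hk
        by_cases hf1 : count false v1 = 0
        · refine ⟨t', u' + 1, by omega, by omega, by omega, ?_, hkk⟩
          have hm2c : count true m2 ≤ 10 := by
            have h : m2 <:+ head := ⟨v1, hm2⟩
            exact hcth ▸ h.sublist.count_le true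
          rw [hv2, count_append]
          omega
        · refine ⟨t' + 1, u' + 1, by omega, by omega, ?_, ?_, hkk⟩
          · have hv1 : count false v1 ≤ c 0 := hcfh ▸ hv1h.count_le false
            have h : c 0 ≤ ∑ m ∈ Finset.range (t' + 1), c m := by
              rw [Finset.sum_range_succ' c t']; omega
            omega
          · have h10 : 10 < v1.length := by
              by_contra hle
              push_neg at hle
              have hv1r : v1 <+: List.replicate 10 true := by
                refine prefix_of_prefix_length_le ⟨m2, hm2⟩
                  (hhead ▸ prefix_append (List.replicate 10 true) (List.replicate (c 0) false)) ?_
                simpa using hle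
              have h := hv1r.sublist.count_le false
              simp [count_replicate] at h
              omega
            have hlen2 : v1.length + m2.length = head.length := by
              have := congrArg List.length hm2; simpa using this
            have hm2suf : m2 <:+ List.replicate (c 0) false := by
              refine suffix_of_suffix_length_le ⟨v1, hm2⟩ (suffix_append _ _) ?_
              rw [List.length_replicate]
              omega
            have hm2c : count true m2 = 0 := by
              have h := hm2suf.sublist.count_le true
              simpa [count_replicate] using h
            rw [hv2, count_append, hm2c]
            have h : u' + 1 + 1 - (t' + 1) = u' + 1 - t' := by omega
            rw [h]
            omega
      · -- both v1 and v2 lie inside the head block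
        push_neg at h2
        have hpre12 : v1 ++ v2 <+: head := by
          refine prefix_of_prefix_length_le (prefix_append _ _) ⟨Y, hv.symm⟩ ?_
          rw [List.length_append, hlenh]
          omega
        obtain ⟨m3, hm3⟩ := hpre12
        have hv3 : v3 = m3 ++ Y := by
          have h : (v1 ++ v2) ++ (m3 ++ Y) = (v1 ++ v2) ++ v3 := by
            rw [← List.append_assoc, hm3]; exact hv.symm
          exact (append_cancel_left h).symm
        have hcfY : count false Y = ∑ m ∈ Finset.range L, c (m + 1) := by
          simp [hY, count_false_Zs, count_replicate]
        have hv3b : count false v3 ≤ ∑ m ∈ Finset.Ico 0 (L + 1), c m := by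
          have hm3s : m3 <:+ head := ⟨v1 ++ v2, hm3⟩
          have hm3f : count false m3 ≤ c 0 := hcfh ▸ hm3s.sublist.count_le false
          rw [hv3, count_append, hcfY]
          have h : ∑ m ∈ Finset.Ico 0 (L + 1), c m = ∑ m ∈ Finset.range (L + 1), c m := by
            rw [Finset.range_eq_Ico]
          rw [h, Finset.sum_range_succ' c L]
          omega
        have h12s : v1 ++ v2 <+ head := List.IsPrefix.sublist ⟨m3, hm3⟩
        have hv1h : v1 <+ head := ((sublist_append_left v1 v2).trans h12s)
        have hv2h : v2 <+ head := ((sublist_append_right v1 v2).trans h12s)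
        by_cases hf1 : count false v1 = 0
        · refine ⟨0, 0, by omega, by omega, by simp [hf1], ?_, hv3b⟩
          have h := hcth ▸ hv2h.count_le true
          simpa using h
        · refine ⟨1, 0, by omega, by omega, ?_, ?_, hv3b⟩
          · have h := hcfh ▸ hv1h.count_le false
            simpa using h
          · have h10 : 10 < v1.length := by
              by_contra hle
              push_neg at hle
              have hv1p : v1 <+: head := by
                refine ⟨v2 ++ m3, ?_⟩
                rw [← hm3, List.append_assoc]
              have hv1r : v1 <+: List.replicate 10 true := by
                refine prefix_of_prefix_length_le hv1p
                  (hhead ▸ prefix_append (List.replicate 10 true) (List.replicate (c 0) false)) ?_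
                simpa using hle
              have h := hv1r.sublist.count_le false
              simp [count_replicate] at h
              omega
            have hs1 : v2 ++ m3 <:+ head := ⟨v1, by rw [← hm3]; exact (List.append_assoc _ _ _).symm⟩
            have hs2 : List.replicate (c 0) false <:+ head := suffix_append _ _
            have hlen3 : v1.length + (v2.length + m3.length) = head.length := by
              have := congrArg List.length hm3; simpa using this
            have hsuf : v2 ++ m3 <:+ List.replicate (c 0) false := by
              refine suffix_of_suffix_length_le hs1 hs2 ?_
              simp only [List.length_append, List.length_replicate]
              omega
            have h := ((sublist_append_left v2 m3).trans hsuf.sublist).count_le true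
            simp [count_replicate] at h
            simp [h]

lemma arith_bound (l A : ℕ) (c : ℕ → ℕ) (hc : ∀ m, c m ≤ 9)
    (htot : ∑ m ∈ Finset.range (l + l), c m = 2 * A)
    (hwin : ∀ w, w ≤ l → ∑ m ∈ Finset.Ico w (w + l), c m = A)
    (hA9 : A + 9 ≤ 10 * (l + 1))
    (t u i j k : ℕ) (htu : t ≤ u + 1) (hu : u ≤ l + l)
    (hi : i ≤ ∑ m ∈ Finset.range t, c m)
    (hj1 : j ≤ 10 * (u + 1 - t)) (hj2 : j ≤ 10 * (l + 1))
    (hk : k ≤ ∑ m ∈ Finset.Ico u (l + l), c m) :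
    i + j + k ≤ A + 10 * (l + 1) := by
  rcases Nat.lt_or_ge u t with hcase | hcase
  · -- t = u + 1, so j = 0
    have ht : t = u + 1 := by omega
    subst ht
    have hj0 : j = 0 := by omega
    have h1 : ∑ m ∈ Finset.range u, c m + ∑ m ∈ Finset.Ico u (l + l), c m = 2 * A := by
      rw [Finset.range_eq_Ico, Finset.sum_Ico_consecutive c (Nat.zero_le u) hu,
        ← Finset.range_eq_Ico, htot]
    have h2 : ∑ m ∈ Finset.range (u + 1), c m
        = ∑ m ∈ Finset.range u, c m + c u := Finset.sum_range_succ c u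
    have hcu := hc u
    omega
  · -- t ≤ u
    have hsplit1 : ∑ m ∈ Finset.range t, c m + ∑ m ∈ Finset.Ico t u, c m
        = ∑ m ∈ Finset.range u, c m := by
      rw [Finset.range_eq_Ico, Finset.range_eq_Ico]
      exact Finset.sum_Ico_consecutive c (Nat.zero_le t) hcase
    have hsplit2 : ∑ m ∈ Finset.range u, c m + ∑ m ∈ Finset.Ico u (l + l), c m = 2 * A := by
      rw [Finset.range_eq_Ico, Finset.sum_Ico_consecutive c (Nat.zero_le u) hu,
        ← Finset.range_eq_Ico, htot]
    rcases Nat.le_total (t + l) u with hD | hD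
    · -- big gap
      have htl : t ≤ l := by omega
      have hMA : A ≤ ∑ m ∈ Finset.Ico t u, c m := by
        rw [← hwin t htl]
        exact Finset.sum_le_sum_of_subset (Finset.Ico_subset_Ico le_rfl hD)
      omega
    · -- small gap: u ≤ t + l
      have hwl : min t l ≤ l := min_le_right t l
      have hws : Finset.Ico t u ⊆ Finset.Ico (min t l) (min t l + l) := by
        apply Finset.Ico_subset_Ico (min_le_left t l)
        rcases le_total t l with h | h
        · rw [min_eq_left h]; omega
        · rw [min_eq_right h]; omega
      have hsd := Finset.sum_sdiff (f := c) hws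
      have hwA : ∑ m ∈ Finset.Ico (min t l) (min t l + l), c m = A := hwin _ hwl
      have hcard : (Finset.Ico (min t l) (min t l + l) \ Finset.Ico t u).card = l - (u - t) := by
        rw [Finset.card_sdiff_of_subset hws, Nat.card_Ico, Nat.card_Ico]
        omega
      have hdb : ∑ m ∈ Finset.Ico (min t l) (min t l + l) \ Finset.Ico t u, c m
          ≤ 9 * (l - (u - t)) := by
        calc ∑ m ∈ Finset.Ico (min t l) (min t l + l) \ Finset.Ico t u, c m
            ≤ (Finset.Ico (min t l) (min t l + l) \ Finset.Ico t u).card • 9 :=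
              Finset.sum_le_card_nsmul _ _ 9 (fun x _ => hc x)
          _ = 9 * (l - (u - t)) := by rw [hcard, smul_eq_mul]; ring
      omega

theorem stmt10 (n : ℕ) (hn : 0 < n) (h60 : 60 ∣ n)
    (s : Fin (n / 30 - 1) → ℕ)
    (hs : ∀ i, 1 ≤ s i ∧ s i ≤ 9)
    (hsum : ∑ i, s i = n / 6 + 5) :
    LCSlen (xstr (n / 30 - 1) s ++ fstr (n / 30 - 1) s) (ylcs n) = n / 2 + 5 := by
  obtain ⟨m, rfl⟩ := h60
  have hm : 1 ≤ m := by omega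
  have e30 : 60 * m / 30 - 1 = 2 * m - 1 := by omega
  have e6 : 60 * m / 6 + 5 = 10 * m + 5 := by omega
  have e2 : 60 * m / 2 + 5 = 30 * m + 5 := by omega
  rw [e2]
  revert hs hsum
  revert s
  rw [e30, e6]
  intro s hs hsum
  -- m ≥ 2
  have hm2 : 2 ≤ m := by
    have h9 : ∑ i, s i ≤ (Finset.univ : Finset (Fin (2 * m - 1))).card • 9 :=
      Finset.sum_le_card_nsmul _ _ 9 (fun i _ => (hs i).2)
    rw [hsum] at h9
    simp only [Finset.card_univ, Fintype.card_fin, smul_eq_mul] at h9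
    omega
  set cs : ℕ → ℕ := fun m' => if h : m' < 2 * m - 1 then s ⟨m', h⟩ else 0 with hcsdef
  set c2 : ℕ → ℕ := fun m' => if m' < 2 * m - 1 then cs m' else cs (m' - (2 * m - 1))
    with hc2def
  have hcs9 : ∀ m', cs m' ≤ 9 := by
    intro m'
    by_cases h : m' < 2 * m - 1
    · simp only [hcsdef, dif_pos h]; exact (hs _).2
    · simp [hcsdef, dif_neg h]
  have hc29 : ∀ m', c2 m' ≤ 9 := by
    intro m'
    by_cases h : m' < 2 * m - 1
    · simp only [hc2def, if_pos h]; exact hcs9 m'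
    · simp only [hc2def, if_neg h]; exact hcs9 _
  have hcssum : ∑ m' ∈ Finset.range (2 * m - 1), cs m' = 10 * m + 5 := by
    rw [← Fin.sum_univ_eq_sum_range cs (2 * m - 1), ← hsum]
    apply Finset.sum_congr rfl
    intro i _
    simp only [hcsdef]
    rw [dif_pos i.isLt]
  have hcsIco : ∀ a b : ℕ, b ≤ 2 * m - 1 →
      ∑ m' ∈ Finset.Ico a b, c2 m' = ∑ m' ∈ Finset.Ico a b, cs m' := by
    intro a b hb
    apply Finset.sum_congr rfl
    intro x hx
    have hxb : x < 2 * m - 1 := lt_of_lt_of_le (Finset.mem_Ico.mp hx).2 hb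
    simp only [hc2def, if_pos hxb]
  have hcsShift : ∀ a b : ℕ, ∑ m' ∈ Finset.Ico ((2 * m - 1) + a) ((2 * m - 1) + b), c2 m'
      = ∑ m' ∈ Finset.Ico a b, cs m' := by
    intro a b
    rw [Finset.sum_Ico_eq_sum_range, Finset.sum_Ico_eq_sum_range]
    have h : (2 * m - 1) + b - ((2 * m - 1) + a) = b - a := by omega
    rw [h]
    apply Finset.sum_congr rfl
    intro x _
    have h1 : ¬ ((2 * m - 1) + a + x < 2 * m - 1) := by omega
    simp only [hc2def, if_neg h1]
    congr 1
    omega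
  have hIco0 : ∑ m' ∈ Finset.Ico 0 (2 * m - 1), cs m' = 10 * m + 5 := by
    rw [← Finset.range_eq_Ico]; exact hcssum
  have htot : ∑ m' ∈ Finset.range ((2 * m - 1) + (2 * m - 1)), c2 m' = 2 * (10 * m + 5) := by
    rw [Finset.range_eq_Ico, ← Finset.sum_Ico_consecutive c2 (Nat.zero_le (2 * m - 1))
      (by omega : 2 * m - 1 ≤ (2 * m - 1) + (2 * m - 1))]
    have h1 : ∑ m' ∈ Finset.Ico 0 (2 * m - 1), c2 m' = 10 * m + 5 := by
      rw [hcsIco 0 (2 * m - 1) le_rfl]; exact hIco0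
    have h2 : ∑ m' ∈ Finset.Ico ((2 * m - 1) + 0) ((2 * m - 1) + (2 * m - 1)), c2 m'
        = 10 * m + 5 := by
      rw [hcsShift 0 (2 * m - 1)]; exact hIco0
    rw [Nat.add_zero] at h2
    omega
  have hwin : ∀ w, w ≤ 2 * m - 1 →
      ∑ m' ∈ Finset.Ico w (w + (2 * m - 1)), c2 m' = 10 * m + 5 := by
    intro w hw
    rw [← Finset.sum_Ico_consecutive c2 hw (by omega : 2 * m - 1 ≤ w + (2 * m - 1))]
    have h2 : ∑ m' ∈ Finset.Ico ((2 * m - 1) + 0) ((2 * m - 1) + w), c2 m'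
        = ∑ m' ∈ Finset.Ico 0 w, cs m' := hcsShift 0 w
    rw [Nat.add_zero] at h2
    rw [show w + (2 * m - 1) = (2 * m - 1) + w by omega, h2, hcsIco w (2 * m - 1) le_rfl]
    have h3 := Finset.sum_Ico_consecutive cs (Nat.zero_le w) hw
    omega
  -- the concatenated string
  have hofn : (List.ofFn fun i : Fin (2 * m - 1) =>
      List.replicate (s i) false ++ List.replicate 10 true).flatten = Zs (2 * m - 1) cs := by
    rw [← ofFn_flatten_eq (2 * m - 1) cs]
    have hfun : (fun i : Fin (2 * m - 1) => List.replicate (s i) false ++ List.replicate 10 true)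
        = fun i : Fin (2 * m - 1) => List.replicate (cs i.val) false ++ List.replicate 10 true := by
      funext i
      simp only [hcsdef, dif_pos i.isLt]
    rw [hfun]
  have hXF : xstr (2 * m - 1) s ++ fstr (2 * m - 1) s =
      List.replicate 10 true ++ Zs ((2 * m - 1) + (2 * m - 1)) c2 := by
    rw [xstr, fstr, hofn, List.append_assoc, Zs_append (2 * m - 1) cs (2 * m - 1) cs]
  have hP : 60 * m / 3 = 20 * m := by omega
  have hylcs : ylcs (60 * m) = List.replicate (20 * m) false ++
      (List.replicate (20 * m) true ++ List.replicate (20 * m) false) := by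
    rw [ylcs, hP, List.append_assoc]
  have hbound : 10 * m + 5 + 10 * ((2 * m - 1) + 1) = 30 * m + 5 := by omega
  -- upper bound
  have hub : ∀ kk ∈ {k : ℕ | ∃ w : List Bool,
      w <+ xstr (2 * m - 1) s ++ fstr (2 * m - 1) s ∧ w <+ ylcs (60 * m) ∧ w.length = k},
      kk ≤ 30 * m + 5 := by
    intro kk hkk
    obtain ⟨w, hwx, hwy, hwl⟩ := hkk
    rw [hylcs, List.sublist_append_iff] at hwy
    obtain ⟨w1, w23, rfl, hw1, hw23⟩ := hwy
    rw [List.sublist_append_iff] at hw23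
    obtain ⟨w2, w3, rfl, hw2, hw3⟩ := hw23
    rw [List.sublist_replicate_iff] at hw1 hw3
    obtain ⟨i, hi, rfl⟩ := hw1
    obtain ⟨k, hk, rfl⟩ := hw3
    rw [List.sublist_replicate_iff] at hw2
    obtain ⟨j, hj, rfl⟩ := hw2
    rw [hXF] at hwx
    rw [List.append_sublist_iff] at hwx
    obtain ⟨v1, v23, hsplit, hsub1, hsub23⟩ := hwx
    rw [List.append_sublist_iff] at hsub23
    obtain ⟨v2, v3, rfl, hsub2, hsub3⟩ := hsub23
    have hveq : v1 ++ v2 ++ v3 = List.replicate 10 true ++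
        Zs ((2 * m - 1) + (2 * m - 1)) c2 := by
      rw [List.append_assoc]; exact hsplit.symm
    obtain ⟨t, u, htu, hu, hiv, hjv, hkv⟩ := split_bound _ c2 v1 v2 v3 hveq
    have hic : i ≤ count false v1 := by
      have h := hsub1.count_le false
      simpa [count_replicate] using h
    have hjc : j ≤ count true v2 := by
      have h := hsub2.count_le true
      simpa [count_replicate] using h
    have hkc : k ≤ count false v3 := by
      have h := hsub3.count_le false
      simpa [count_replicate] using h
    have harith := arith_bound (2 * m - 1) (10 * m + 5) c2 hc29 htot hwin
      (by omega) t u i j k htu hu (le_trans hic hiv)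
      (le_trans hjc hjv) (by omega) (le_trans hkc hkv)
    rw [← hwl]
    simp only [List.length_append, List.length_replicate]
    omega
  -- lower bound witness
  have hmem : (30 * m + 5) ∈ {k : ℕ | ∃ w : List Bool,
      w <+ xstr (2 * m - 1) s ++ fstr (2 * m - 1) s ∧ w <+ ylcs (60 * m) ∧ w.length = k} := by
    refine ⟨List.replicate (10 * m + 5) false ++ List.replicate (20 * m) true, ?_, ?_, ?_⟩
    · rw [xstr, fstr, hofn, bZs_eq_Ws, List.append_assoc]
      refine List.Sublist.append ?_ ?_
      · rw [List.replicate_sublist_iff, count_false_Ws, hcssum]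
      · rw [List.replicate_sublist_iff]
        simp only [count_append, count_true_Zs, List.count_replicate_self]
        omega
    · rw [hylcs]
      refine List.Sublist.append ?_ ?_
      · exact (List.replicate_sublist_replicate false).mpr (by omega)
      · exact sublist_append_left _ _
    · simp only [List.length_append, List.length_replicate]; omega
  unfold LCSlen
  apply _root_.le_antisymm
  · exact csSup_le ⟨30 * m + 5, hmem⟩ hub
  · exact le_csSup ⟨30 * m + 5, hub⟩ hmem
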